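/- Let $\rho > 1$, let $(\alpha_n)_{n\ge 0}$ be positive reals with $l \le \alpha_n \le u$ for constants $0 < l \le u < \infty$, and let $(Y_n)_{n\ge 1}$ be i.i.d. with $\Pr(Y_1 < 0) > 0$ and $\Pr(Y_1 \ge x) \le C(\log x)^{-\alpha}$ for large $x$, with $\alpha > 1$. Define $X_n = \sum_{k=1}^n \rho^{n-k}\alpha_{n-k} Y_k$. Then there is $c > 0$ such that $\Pr\big(\bigcap_{n=1}^\infty \{X_n \le -c\rho^{n-1}\}\big) > 0$. In particular $\Pr(\sup_{n\ge 1} X_n \le 0) > 0$. -/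

import Mathlib

open MeasureTheory ProbabilityTheory Finset Filter
open scoped ENNReal NNReal Topology

theorem aux_one_sub_sum_le_prod (s : Finset ℕ) (x : ℕ → ℝ) (h0 : ∀ i ∈ s, 0 ≤ x i)
    (h1 : ∀ i ∈ s, x i ≤ 1) :
    1 - ∑ i ∈ s, x i ≤ ∏ i ∈ s, (1 - x i) := by
  induction s using Finset.cons_induction with
  | empty => simp
  | cons a s ha ih =>
    rw [Finset.prod_cons, Finset.sum_cons]
    have hxa : 0 ≤ x a := h0 a (Finset.mem_cons_self a s)
    have hxa1 : x a ≤ 1 := h1 a (Finset.mem_cons_self a s)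
    have hs0 : 0 ≤ ∑ i ∈ s, x i := Finset.sum_nonneg fun i hi => h0 i (Finset.mem_cons.2 (Or.inr hi))
    have ih' := ih (fun i hi => h0 i (Finset.mem_cons.2 (Or.inr hi)))
      (fun i hi => h1 i (Finset.mem_cons.2 (Or.inr hi)))
    nlinarith [mul_le_mul_of_nonneg_left ih' (by linarith : (0:ℝ) ≤ 1 - x a)]

set_option maxHeartbeats 1000000 in
theorem stmt_19 {Ω : Type*} [MeasureSpace Ω] [IsProbabilityMeasure (ℙ : Measure Ω)]
    (ρ : ℝ) (hρ : 1 < ρ)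
    (A : ℕ → ℝ) (l u : ℝ) (hl : 0 < l) (hlu : l ≤ u)
    (hA : ∀ n, l ≤ A n ∧ A n ≤ u)
    (Y : ℕ → Ω → ℝ) (hmeas : ∀ n, Measurable (Y n))
    (hindep : iIndepFun Y ℙ)
    (hident : ∀ n, IdentDistrib (Y n) (Y 1) ℙ ℙ)
    (hneg : 0 < ℙ {ω | Y 1 ω < 0})
    (α : ℝ) (hα : 1 < α)
    (htail : ∃ C : ℝ, ∃ x0 : ℝ, ∀ x : ℝ, x0 ≤ x →
      (ℙ {ω | x ≤ Y 1 ω}).toReal ≤ C * Real.log x ^ (-α))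
    (X : ℕ → Ω → ℝ)
    (hX : ∀ n ω, X n ω = ∑ k ∈ Finset.Icc 1 n, ρ ^ (n - k) * A (n - k) * Y k ω) :
    ∃ c > (0 : ℝ),
      0 < ℙ {ω | ∀ n : ℕ, 1 ≤ n → X n ω ≤ -c * ρ ^ (n - 1)} ∧
      0 < ℙ {ω | ∀ n : ℕ, 1 ≤ n → X n ω ≤ 0} := by
  obtain ⟨C, x0, htail'⟩ := htail
  have hu : 0 < u := lt_of_lt_of_le hl hlu
  have hρ0 : (0:ℝ) < ρ := by linarith
  -- Step 1 : find δ > 0 with positive probability for {Y 1 ≤ -δ}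
  have hδex : ∃ δ : ℝ, 0 < δ ∧ 0 < ℙ {ω | Y 1 ω ≤ -δ} := by
    by_contra h
    push_neg at h
    have hzero : ∀ n : ℕ, ℙ {ω | Y 1 ω ≤ -(1/(n+1:ℝ))} = 0 := by
      intro n
      have := h (1/(n+1:ℝ)) (by positivity)
      exact le_antisymm this zero_le
    have hsub : {ω | Y 1 ω < 0} ⊆ ⋃ n : ℕ, {ω | Y 1 ω ≤ -(1/(n+1:ℝ))} := by
      intro ω hω
      simp only [Set.mem_setOf_eq] at hω
      obtain ⟨n, hn⟩ := exists_nat_one_div_lt (show (0:ℝ) < -(Y 1 ω) by linarith)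
      exact Set.mem_iUnion.mpr ⟨n, by simp only [Set.mem_setOf_eq]; linarith⟩
    have : ℙ {ω | Y 1 ω < 0} = 0 := by
      refine le_antisymm ?_ zero_le
      calc ℙ {ω | Y 1 ω < 0} ≤ ℙ (⋃ n : ℕ, {ω | Y 1 ω ≤ -(1/(n+1:ℝ))}) := measure_mono hsub
        _ ≤ ∑' n : ℕ, ℙ {ω | Y 1 ω ≤ -(1/(n+1:ℝ))} := measure_iUnion_le _
        _ = 0 := by
            refine ENNReal.tsum_eq_zero.mpr fun n => ?_
            simpa [one_div] using hzero n
    rw [this] at hneg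
    exact lt_irrefl 0 hneg
  obtain ⟨δ, hδ, hpδ⟩ := hδex
  -- parameters
  set σ : ℝ := (1 + ρ)/2 with hσdef
  have hσ1 : 1 < σ := by rw [hσdef]; linarith
  have hσρ : σ < ρ := by rw [hσdef]; linarith
  have hσ0 : 0 < σ := by linarith
  clear_value σ
  set q : ℝ := σ / ρ with hqdef
  have hq0 : 0 < q := by positivity
  have hq1 : q < 1 := by rw [hqdef, div_lt_one hρ0]; exact hσρ
  clear_value q
  set ε : ℝ := l * δ * (1 - q) / (2 * u * q) with hεdef
  have hε : 0 < ε := by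
    rw [hεdef]
    exact div_pos (mul_pos (mul_pos hl hδ) (by linarith)) (mul_pos (mul_pos two_pos hu) hq0)
  clear_value ε
  set c : ℝ := l * δ / 2 with hcdef
  have hc : 0 < c := by rw [hcdef]; positivity
  clear_value c
  have hkey_id : u * ε * (q / (1 - q)) = c := by
    rw [hεdef, hcdef]
    have h1 : (1:ℝ) - q ≠ 0 := (show (0:ℝ) < 1 - q by linarith).ne'
    field_simp
  -- Step 2 : deterministic bound
  have key : ∀ ω : Ω, Y 1 ω ≤ -δ → (∀ k : ℕ, 2 ≤ k → Y k ω ≤ ε * σ ^ (k-1)) →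
      ∀ n : ℕ, 1 ≤ n → X n ω ≤ -c * ρ ^ (n-1) := by
    intro ω h1 h2 n hn
    rw [hX]
    have hsplit : Finset.Icc 1 n = insert 1 (Finset.Icc 2 n) := by
      ext x; simp only [Finset.mem_Icc, Finset.mem_insert]; omega
    have h1n : (1:ℕ) ∉ Finset.Icc 2 n := by simp
    rw [hsplit, Finset.sum_insert h1n]
    -- first term
    have hterm1 : ρ ^ (n-1) * A (n-1) * Y 1 ω ≤ ρ ^ (n-1) * (l * (-δ)) := by
      have hAY : A (n-1) * Y 1 ω ≤ l * (-δ) := by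
        have h1' : Y 1 ω ≤ 0 := by linarith
        have := mul_le_mul_of_nonpos_right (hA (n-1)).1 h1'
        nlinarith [hl.le, (hA (n-1)).1]
      calc ρ ^ (n-1) * A (n-1) * Y 1 ω = ρ ^ (n-1) * (A (n-1) * Y 1 ω) := by ring
        _ ≤ ρ ^ (n-1) * (l * (-δ)) :=
          mul_le_mul_of_nonneg_left hAY (pow_nonneg hρ0.le _)
    -- remaining terms
    have hterm2 : ∑ k ∈ Finset.Icc 2 n, ρ ^ (n-k) * A (n-k) * Y k ω ≤
        (u * ε * ρ ^ (n-1)) * ∑ k ∈ Finset.Icc 2 n, q ^ (k-1) := by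
      rw [Finset.mul_sum]
      apply Finset.sum_le_sum
      intro k hk
      rw [Finset.mem_Icc] at hk
      have hAY : A (n-k) * Y k ω ≤ u * (ε * σ ^ (k-1)) := by
        rcases le_or_gt 0 (Y k ω) with hY | hY
        · calc A (n-k) * Y k ω ≤ u * Y k ω :=
                mul_le_mul_of_nonneg_right (hA (n-k)).2 hY
            _ ≤ u * (ε * σ ^ (k-1)) :=
                mul_le_mul_of_nonneg_left (h2 k hk.1) hu.le
        · have : A (n-k) * Y k ω ≤ 0 :=
            mul_nonpos_of_nonneg_of_nonpos (by linarith [(hA (n-k)).1]) hY.le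
          have hpos : 0 < u * (ε * σ ^ (k-1)) := by positivity
          linarith
      have step1 : ρ ^ (n-k) * A (n-k) * Y k ω ≤ ρ ^ (n-k) * (u * (ε * σ ^ (k-1))) := by
        calc ρ ^ (n-k) * A (n-k) * Y k ω = ρ ^ (n-k) * (A (n-k) * Y k ω) := by ring
          _ ≤ _ := mul_le_mul_of_nonneg_left hAY (pow_nonneg hρ0.le _)
      have step2 : ρ ^ (n-k) * (u * (ε * σ ^ (k-1))) = u * ε * ρ ^ (n-1) * q ^ (k-1) := by
        have hexp : (n-k) + (k-1) = n-1 := by omega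
        have hρk : ρ ^ (k-1) ≠ 0 := by positivity
        rw [hqdef, div_pow]
        rw [show ρ ^ (n-1) = ρ ^ (n-k) * ρ ^ (k-1) by rw [← pow_add, hexp]]
        field_simp
      linarith [step1, step2.symm.le]
    -- geometric bound
    have hgeom : ∑ k ∈ Finset.Icc 2 n, q ^ (k-1) ≤ q / (1 - q) := by
      have hmap : Finset.Icc 2 n = (Finset.Icc 1 (n-1)).map (addRightEmbedding 1) := by
        rw [Finset.map_add_right_Icc]
        congr 1
        omega
      rw [hmap, Finset.sum_map]
      simp only [addRightEmbedding_apply]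
      have heq : ∀ j ∈ Finset.Icc 1 (n-1), q ^ (j + 1 - 1) = q ^ j := by
        intro j hj; congr 1
      rw [Finset.sum_congr rfl heq]
      have hins : Finset.range n = insert 0 (Finset.Icc 1 (n-1)) := by
        ext x; simp only [Finset.mem_range, Finset.mem_insert, Finset.mem_Icc]; omega
      have h0not : (0:ℕ) ∉ Finset.Icc 1 (n-1) := by simp
      have hrange : ∑ j ∈ Finset.range n, q ^ j = 1 + ∑ j ∈ Finset.Icc 1 (n-1), q ^ j := by
        rw [hins, Finset.sum_insert h0not, pow_zero]
      have htsum : ∑ j ∈ Finset.range n, q ^ j ≤ (1 - q)⁻¹ := by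
        have hsummable : Summable (fun j : ℕ => q ^ j) := summable_geometric_of_lt_one hq0.le hq1
        calc ∑ j ∈ Finset.range n, q ^ j ≤ ∑' j : ℕ, q ^ j :=
              Summable.sum_le_tsum _ (fun i _ => by positivity) hsummable
          _ = (1 - q)⁻¹ := tsum_geometric_of_lt_one hq0.le hq1
      have hfin : (1 - q)⁻¹ - 1 = q / (1 - q) := by
        have h1q : (1:ℝ) - q ≠ 0 := (show (0:ℝ) < 1 - q by linarith).ne'
        field_simp
        ring
      linarith
    have hrpow : (0:ℝ) ≤ ρ ^ (n-1) := pow_nonneg hρ0.le _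
    have huep : (0:ℝ) ≤ u * ε * ρ ^ (n-1) := by positivity
    have hfinal : (u * ε * ρ ^ (n-1)) * ∑ k ∈ Finset.Icc 2 n, q ^ (k-1) ≤ c * ρ ^ (n-1) := by
      calc (u * ε * ρ ^ (n-1)) * ∑ k ∈ Finset.Icc 2 n, q ^ (k-1)
          ≤ (u * ε * ρ ^ (n-1)) * (q / (1-q)) := mul_le_mul_of_nonneg_left hgeom huep
        _ = (u * ε * (q / (1-q))) * ρ ^ (n-1) := by ring
        _ = c * ρ ^ (n-1) := by rw [hkey_id]
    have hlδ : l * δ = 2 * c := by rw [hcdef]; ring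
    nlinarith [hterm1, hterm2, hfinal, hrpow]
  -- Step 3 : probabilistic part
  -- thresholds
  set t : ℕ → ℝ := fun k => if k = 1 then -δ else ε * σ ^ (k-1) with htdef
  have ht1 : t 1 = -δ := by simp [htdef]
  have htk : ∀ k, 2 ≤ k → t k = ε * σ ^ (k-1) := by
    intro k hk
    have : k ≠ 1 := by omega
    simp [htdef, this]
  have htδ0 : True := trivial
  have htδ : ∀ k, -δ ≤ t k := by
    intro k
    rcases eq_or_ne k 1 with h | h
    · simp [htdef, h]
    · have h0 : 0 < ε * σ ^ (k-1) := by positivity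
      simp only [htdef, if_neg h]
      linarith
  clear_value t
  -- good and bad sets
  set G : ℕ → Set Ω := fun k => Y k ⁻¹' Set.Iic (t k) with hGdef
  set B : ℕ → Set Ω := fun k => Y k ⁻¹' Set.Ioi (t k) with hBdef
  clear_value G B
  have hGB : ∀ k, G k = (B k)ᶜ := by
    intro k
    simp only [hGdef, hBdef]
    ext ω
    simp [Set.mem_preimage, not_lt]
  have hBmeas : ∀ k, MeasurableSet (B k) := by
    intro k; simp only [hBdef]; exact (hmeas k) measurableSet_Ioi
  set p₀ : ℝ := (ℙ {ω | Y 1 ω ≤ -δ}).toReal with hp₀def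
  clear_value p₀
  have hp0 : 0 < p₀ := by
    rw [hp₀def]; exact ENNReal.toReal_pos hpδ.ne' (measure_ne_top _ _)
  -- each good set has probability at least p₀
  have hGk_ge : ∀ k, p₀ ≤ (ℙ (G k)).toReal := by
    intro k
    have hsub : Y k ⁻¹' Set.Iic (-δ) ⊆ G k := by
      intro ω hω
      simp only [hGdef, Set.mem_preimage, Set.mem_Iic] at *
      exact le_trans hω (htδ k)
    have hident' : ℙ (Y k ⁻¹' Set.Iic (-δ)) = ℙ (Y 1 ⁻¹' Set.Iic (-δ)) :=
      (hident k).measure_mem_eq measurableSet_Iic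
    have heq : ℙ {ω | Y 1 ω ≤ -δ} = ℙ (Y k ⁻¹' Set.Iic (-δ)) := hident'.symm
    rw [hp₀def, heq]
    exact ENNReal.toReal_mono (measure_ne_top _ _) (measure_mono hsub)
  -- the bad probabilities
  set s : ℕ → ℝ := fun k => (ℙ (B k)).toReal with hsdef
  clear_value s
  have hs_nonneg : ∀ k, 0 ≤ s k := by intro k; rw [hsdef]; exact ENNReal.toReal_nonneg
  have hs_le_one : ∀ k, s k ≤ 1 := by
    intro k
    calc s k = (ℙ (B k)).toReal := by rw [hsdef]
      _ ≤ (1 : ENNReal).toReal := ENNReal.toReal_mono ENNReal.one_ne_top prob_le_one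
      _ = 1 := ENNReal.toReal_one
  have hGs : ∀ k, (ℙ (G k)).toReal = 1 - s k := by
    intro k
    rw [hGB k, prob_compl_eq_one_sub (hBmeas k),
      ENNReal.toReal_sub_of_le prob_le_one ENNReal.one_ne_top, ENNReal.toReal_one, hsdef]
  have hsY1 : ∀ k, s k = (ℙ {ω | t k < Y 1 ω}).toReal := by
    intro k
    simp only [hsdef, hBdef]
    congr 1
    exact (hident k).measure_mem_eq measurableSet_Ioi
  -- uniform version of the tail bound
  have hC0 : ∀ x : ℝ, max x0 2 ≤ x → (ℙ {ω | x ≤ Y 1 ω}).toReal ≤ max C 0 * Real.log x ^ (-α) := by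
    intro x hx
    have hx2 : (2:ℝ) ≤ x := le_trans (le_max_right x0 2) hx
    have h1 := htail' x (le_trans (le_max_left x0 2) hx)
    have hlog : 0 < Real.log x := Real.log_pos (by linarith)
    have h2 : C * Real.log x ^ (-α) ≤ max C 0 * Real.log x ^ (-α) :=
      mul_le_mul_of_nonneg_right (le_max_left _ _) (Real.rpow_nonneg hlog.le _)
    linarith
  -- eventual polynomial bound on the bad probabilities
  set m : ℝ := Real.log σ / 2 with hmdef
  clear_value m
  have hm : 0 < m := by
    rw [hmdef]
    have := Real.log_pos hσ1
    linarith
  set D : ℝ := max C 0 * m ^ (-α) with hDdef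
  clear_value D
  have hD : 0 ≤ D := by
    rw [hDdef]
    exact mul_nonneg (le_max_right C 0) (Real.rpow_nonneg hm.le _)
  have hbig : ∀ᶠ k : ℕ in atTop, s k ≤ D * (k:ℝ) ^ (-α) := by
    have h2 : Tendsto (fun k : ℕ => ε * σ ^ (k-1)) atTop atTop := by
      have ha : Tendsto (fun k : ℕ => σ ^ k) atTop atTop :=
        tendsto_pow_atTop_atTop_of_one_lt hσ1
      have hb : Tendsto (fun k : ℕ => k - 1) atTop atTop := tendsto_sub_atTop_nat 1
      exact (ha.comp hb).const_mul_atTop hε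
    have hev1 : ∀ᶠ k : ℕ in atTop, max x0 2 ≤ ε * σ ^ (k-1) := h2.eventually_ge_atTop _
    have hev2 : ∀ᶠ k : ℕ in atTop, (Real.log σ - Real.log ε)/m ≤ (k:ℝ) :=
      tendsto_natCast_atTop_atTop.eventually_ge_atTop _
    have hev3 : ∀ᶠ k : ℕ in atTop, 2 ≤ k := eventually_ge_atTop 2
    filter_upwards [hev1, hev2, hev3] with k hk1 hk2 hk3
    have htkk : t k = ε * σ ^ (k-1) := htk k hk3
    have hkpos : (0:ℝ) < (k:ℝ) := by
      have : (0:ℕ) < k := by omega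
      exact_mod_cast this
    have hklog : m * k ≤ Real.log (t k) := by
      rw [htkk, Real.log_mul hε.ne' (by positivity), Real.log_pow]
      have hcast : ((k-1 : ℕ) : ℝ) = (k:ℝ) - 1 := by
        have h1k : (1:ℕ) ≤ k := by omega
        push_cast [h1k]
        ring
      rw [hcast]
      have hk2' : Real.log σ - Real.log ε ≤ m * k := by
        rw [div_le_iff₀ hm] at hk2
        linarith
      have hlogσ : Real.log σ = 2 * m := by rw [hmdef]; ring
      nlinarith [hm.le]
    have hmk : 0 < m * k := mul_pos hm hkpos
    calc s k = (ℙ {ω | t k < Y 1 ω}).toReal := hsY1 k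
      _ ≤ (ℙ {ω | t k ≤ Y 1 ω}).toReal :=
          ENNReal.toReal_mono (measure_ne_top _ _)
            (measure_mono (fun ω (h : t k < Y 1 ω) => le_of_lt h))
      _ ≤ max C 0 * Real.log (t k) ^ (-α) := by
          rw [htkk]
          exact hC0 _ hk1
      _ ≤ max C 0 * (m * k) ^ (-α) :=
          mul_le_mul_of_nonneg_left
            (Real.rpow_le_rpow_of_nonpos hmk hklog (by linarith)) (le_max_right _ _)
      _ = D * (k:ℝ) ^ (-α) := by
          rw [hDdef, Real.mul_rpow hm.le (Nat.cast_nonneg k)]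
          ring
  obtain ⟨N₁, hN₁⟩ := eventually_atTop.mp hbig
  have hsummable : Summable s := by
    rw [← summable_nat_add_iff N₁]
    refine Summable.of_nonneg_of_le (fun k => hs_nonneg _)
      (fun k => hN₁ (k+N₁) (Nat.le_add_left _ _)) ?_
    exact ((summable_nat_add_iff N₁).mpr ((Real.summable_nat_rpow).mpr (by linarith))).mul_left D
  have htend : Tendsto (fun i => ∑' k, s (k + i)) atTop (𝓝 0) := tendsto_sum_nat_add s
  obtain ⟨N₂, hN₂⟩ := eventually_atTop.mp (htend.eventually (gt_mem_nhds (by norm_num : (0:ℝ) < 1/2)))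
  set a : ℝ := p₀ ^ N₂ * (1/2) with hadef
  clear_value a
  have ha : 0 < a := by rw [hadef]; positivity
  obtain ⟨M, hM⟩ := eventually_atTop.mp (htend.eventually (gt_mem_nhds ha))
  set K : ℕ := max M N₂ + 1 with hKdef
  clear_value K
  -- probability of the finite intersection
  have hAK : ℙ (⋂ k ∈ Finset.range (K+1), G k) = ∏ k ∈ Finset.range (K+1), ℙ (G k) := by
    have h := hindep.measure_inter_preimage_eq_mul (Finset.range (K+1))
      (sets := fun k => Set.Iic (t k)) (fun i _ => measurableSet_Iic)
    simp only [hGdef]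
    exact h
  have hAKreal : (ℙ (⋂ k ∈ Finset.range (K+1), G k)).toReal
      = ∏ k ∈ Finset.range (K+1), (ℙ (G k)).toReal := by
    rw [hAK, ENNReal.toReal_prod]
  have hprod_lower : a ≤ (ℙ (⋂ k ∈ Finset.range (K+1), G k)).toReal := by
    rw [hAKreal]
    have hN2K : N₂ ≤ K + 1 := by omega
    rw [← Finset.prod_range_mul_prod_Ico (fun k => (ℙ (G k)).toReal) hN2K]
    have h1 : p₀ ^ N₂ ≤ ∏ k ∈ Finset.range N₂, (ℙ (G k)).toReal := by
      calc p₀ ^ N₂ = ∏ _k ∈ Finset.range N₂, p₀ := by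
            rw [Finset.prod_const, Finset.card_range]
        _ ≤ _ := Finset.prod_le_prod (fun i _ => hp0.le) (fun i _ => hGk_ge i)
    have h2 : (1:ℝ)/2 ≤ ∏ k ∈ Finset.Ico N₂ (K+1), (ℙ (G k)).toReal := by
      have heq : ∀ k ∈ Finset.Ico N₂ (K+1), (ℙ (G k)).toReal = 1 - s k := fun k _ => hGs k
      rw [Finset.prod_congr rfl heq]
      have hshift : Summable (fun k => s (k + N₂)) := (summable_nat_add_iff N₂).mpr hsummable
      have hsum_le : ∑ k ∈ Finset.Ico N₂ (K+1), s k ≤ 1/2 := by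
        rw [Finset.sum_Ico_eq_sum_range]
        calc ∑ i ∈ Finset.range (K+1-N₂), s (N₂ + i)
            = ∑ i ∈ Finset.range (K+1-N₂), s (i + N₂) := by
              refine Finset.sum_congr rfl fun i _ => ?_
              rw [Nat.add_comm]
          _ ≤ ∑' i, s (i + N₂) := Summable.sum_le_tsum _ (fun i _ => hs_nonneg _) hshift
          _ ≤ 1/2 := (hN₂ N₂ le_rfl).le
      have haux := aux_one_sub_sum_le_prod (Finset.Ico N₂ (K+1)) s
        (fun i _ => hs_nonneg i) (fun i _ => hs_le_one i)
      linarith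
    calc a = p₀ ^ N₂ * (1/2) := hadef
      _ ≤ _ := mul_le_mul h1 h2 (by norm_num) (le_trans (by positivity) h1)
  -- the union of late bad events is smaller
  have hUbound : ℙ (⋃ n : ℕ, B (n + (K+1))) < ℙ (⋂ k ∈ Finset.range (K+1), G k) := by
    have hb1 : ℙ (⋃ n : ℕ, B (n + (K+1))) ≤ ∑' n, ℙ (B (n + (K+1))) := measure_iUnion_le _
    have hb2 : ∑' n : ℕ, ℙ (B (n + (K+1))) = ENNReal.ofReal (∑' n : ℕ, s (n + (K+1))) := by
      rw [ENNReal.ofReal_tsum_of_nonneg (fun n => hs_nonneg _)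
        ((summable_nat_add_iff (K+1)).mpr hsummable)]
      refine tsum_congr fun n => ?_
      simp only [hsdef]
      exact (ENNReal.ofReal_toReal (measure_ne_top _ _)).symm
    have hb3 : (∑' n : ℕ, s (n + (K+1))) < a := hM (K+1) (by omega)
    calc ℙ (⋃ n : ℕ, B (n + (K+1))) ≤ ENNReal.ofReal (∑' n : ℕ, s (n + (K+1))) := hb2 ▸ hb1
      _ < ENNReal.ofReal a := (ENNReal.ofReal_lt_ofReal_iff ha).mpr hb3
      _ ≤ ℙ (⋂ k ∈ Finset.range (K+1), G k) := by
          rw [← ENNReal.ofReal_toReal (measure_ne_top ℙ (⋂ k ∈ Finset.range (K+1), G k))]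
          exact ENNReal.ofReal_le_ofReal hprod_lower
  -- the full good event has positive probability
  have hEpos : 0 < ℙ ((⋂ k ∈ Finset.range (K+1), G k) \ (⋃ n : ℕ, B (n + (K+1)))) := by
    rcases (zero_le (a := ℙ ((⋂ k ∈ Finset.range (K+1), G k) \ (⋃ n : ℕ, B (n + (K+1)))))).lt_or_eq
      with h | h
    · exact h
    · exfalso
      have hsub2 : (⋂ k ∈ Finset.range (K+1), G k) ⊆
          ((⋂ k ∈ Finset.range (K+1), G k) \ (⋃ n : ℕ, B (n + (K+1)))) ∪ (⋃ n : ℕ, B (n + (K+1))) := by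
        intro ω hω
        by_cases hU : ω ∈ ⋃ n : ℕ, B (n + (K+1))
        · exact Or.inr hU
        · exact Or.inl ⟨hω, hU⟩
      have hle : ℙ (⋂ k ∈ Finset.range (K+1), G k) ≤
          ℙ ((⋂ k ∈ Finset.range (K+1), G k) \ (⋃ n : ℕ, B (n + (K+1)))) + ℙ (⋃ n : ℕ, B (n + (K+1))) :=
        (measure_mono hsub2).trans (measure_union_le _ _)
      rw [← h, zero_add] at hle
      exact absurd (lt_of_le_of_lt hle hUbound) (lt_irrefl _)
  -- this event is contained in the target events
  have hEsub : ((⋂ k ∈ Finset.range (K+1), G k) \ (⋃ n : ℕ, B (n + (K+1)))) ⊆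
      {ω | ∀ n : ℕ, 1 ≤ n → X n ω ≤ -c * ρ ^ (n-1)} := by
    rintro ω ⟨hωA, hωU⟩
    have hgood : ∀ k : ℕ, k ≤ K → Y k ω ≤ t k := by
      intro k hk
      have hmem : ω ∈ G k := by
        have := Set.mem_iInter₂.mp hωA k (Finset.mem_range.mpr (by omega))
        exact this
      simpa only [hGdef, Set.mem_preimage, Set.mem_Iic] using hmem
    have hbad : ∀ k : ℕ, K+1 ≤ k → Y k ω ≤ t k := by
      intro k hk
      have hnot : ω ∉ B ((k - (K+1)) + (K+1)) :=
        fun hmem => hωU (Set.mem_iUnion.mpr ⟨k - (K+1), hmem⟩)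
      have hkk : (k - (K+1)) + (K+1) = k := by omega
      rw [hkk] at hnot
      simp only [hBdef, Set.mem_preimage, Set.mem_Ioi, not_lt] at hnot
      exact hnot
    intro n hn
    refine key ω ?_ ?_ n hn
    · have := hgood 1 (by omega)
      rwa [ht1] at this
    · intro k hk
      rcases le_or_gt k K with h | h
      · have := hgood k h
        rwa [htk k hk] at this
      · have := hbad k (by omega)
        rwa [htk k hk] at this
  refine ⟨c, hc, ?_, ?_⟩
  · exact lt_of_lt_of_le hEpos (measure_mono hEsub)
  · refine lt_of_lt_of_le hEpos (measure_mono (hEsub.trans ?_))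
    intro ω hω n hn
    have h1 := hω n hn
    have h2 : 0 ≤ c * ρ ^ (n-1) := mul_nonneg hc.le (pow_nonneg hρ0.le _)
    linarith
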